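/- Let b₁,…,b_N be deterministic complex numbers and X₁,…,X_N independent random variables with E X_i = 0, E|X_i|² = 1, and E|X_i|^p ≤ C_p for all p. Then for any ε > 0 and D > 0 there is N₀ such that for N ≥ N₀, P(|Σ_i b_i X_i| > N^ε (Σ_i |b_i|²)^{1/2}) ≤ N^{-D}. -/

import Mathlib

open MeasureTheory Finset

noncomputable def ldCmax (C : ℕ → ℝ) (k : ℕ) : ℝ := ∑ m ∈ range (2 * k + 3), (|C m| + 1)

noncomputable def ldK (C : ℕ → ℝ) : ℕ → ℝ
  | 0 => 1
  | (k + 1) => 1 + ldK C k + 4 ^ (k + 1) * ldK C k * ldCmax C k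

lemma ldCmax_nonneg (C : ℕ → ℝ) (k : ℕ) : 0 ≤ ldCmax C k :=
  Finset.sum_nonneg fun m _ => by positivity

lemma ldCmax_ge (C : ℕ → ℝ) (k : ℕ) {m : ℕ} (hm : m < 2 * k + 3) : C m ≤ ldCmax C k := by
  calc C m ≤ |C m| + 1 := by cases abs_cases (C m) <;> linarith
  _ ≤ ldCmax C k := Finset.single_le_sum (f := fun m => |C m| + 1)
      (fun i _ => by positivity) (Finset.mem_range.2 hm)

lemma ldK_ge_one (C : ℕ → ℝ) : ∀ k, 1 ≤ ldK C k := by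
  intro k
  induction k with
  | zero => simp [ldK]
  | succ k ih =>
    have h1 : 0 ≤ (4:ℝ) ^ (k + 1) * ldK C k * ldCmax C k := by
      have := ldCmax_nonneg C k; positivity
    simp only [ldK]; linarith

lemma ldK_le_succ (C : ℕ → ℝ) (k : ℕ) : ldK C k ≤ ldK C (k + 1) := by
  have h1 : 0 ≤ (4:ℝ) ^ (k + 1) * ldK C k * ldCmax C k := by
    have := ldCmax_nonneg C k; have := ldK_ge_one C k; positivity
  simp only [ldK]; linarith

lemma ld_even_pow_nonneg (x : ℝ) (r : ℕ) : 0 ≤ x ^ (2 * r) := by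
  rw [pow_mul]; exact pow_nonneg (sq_nonneg x) r

lemma ld_abs_even (x : ℝ) (r : ℕ) : |x| ^ (2 * r) = x ^ (2 * r) := by
  rw [pow_abs, abs_of_nonneg (ld_even_pow_nonneg x r)]

lemma ld_odd_pt (x : ℝ) (k : ℕ) : |x| ^ (2 * k + 1) ≤ x ^ (2 * k) + x ^ (2 * k + 2) := by
  have h0 : 0 ≤ x ^ (2 * k) := ld_even_pow_nonneg x k
  have h2 : (0:ℝ) ≤ x ^ (2 * k + 2) := by
    have := ld_even_pow_nonneg x (k + 1); rwa [show 2 * (k + 1) = 2 * k + 2 from by ring] at this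
  rcases le_or_gt |x| 1 with h | h
  · have h1 : |x| ^ (2 * k + 1) ≤ |x| ^ (2 * k) :=
      pow_le_pow_of_le_one (abs_nonneg x) h (by omega)
    rw [ld_abs_even x k] at h1
    linarith
  · have h1 : |x| ^ (2 * k + 1) ≤ |x| ^ (2 * k + 2) := pow_le_pow_right₀ h.le (by omega)
    have h3 : |x| ^ (2 * k + 2) = x ^ (2 * k + 2) := by
      have := ld_abs_even x (k + 1); rwa [show 2 * (k + 1) = 2 * k + 2 from by ring] at this
    rw [h3] at h1
    linarith

section aux
set_option linter.unusedSectionVars false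
variable {Ω : Type} [MeasurableSpace Ω] {μ : Measure Ω} [IsProbabilityMeasure μ] {N : ℕ}
  {X : Fin N → Ω → ℝ} {a : Fin N → ℝ} {C : ℕ → ℝ}

lemma ld_indep_scaled (hX : ∀ i, Measurable (X i))
    (hind : ProbabilityTheory.iIndepFun X μ)
    {s : Finset (Fin N)} {j : Fin N} (hj : j ∉ s) :
    ProbabilityTheory.IndepFun (fun ω => ∑ i ∈ s, a i * X i ω) (fun ω => a j * X j ω) μ := by
  have h' : ProbabilityTheory.iIndepFun
      (fun i ω => a i * X i ω) μ :=
    hind.comp (fun i x => a i * x) (fun i => measurable_id.const_mul (a i))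
  have hmeas : ∀ i, Measurable (fun ω => a i * X i ω) := fun i => (hX i).const_mul (a i)
  have := h'.indepFun_finsetSum_of_notMem hmeas hj
  have hEq : (∑ i ∈ s, fun ω => a i * X i ω) = fun ω => ∑ i ∈ s, a i * X i ω := by
    funext ω; simp
  rwa [hEq] at this

/-- Integrability of powers of a single scaled variable. -/

lemma ld_int_single (hX : ∀ i, Measurable (X i))
    (hmom : ∀ i p, Integrable (fun ω => |X i ω| ^ p) μ) (j : Fin N) (m : ℕ) :
    Integrable (fun ω => (a j * X j ω) ^ m) μ := by
  have h1 : Integrable (fun ω => (X j ω) ^ m) μ := by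
    refine (hmom j m).mono ((hX j).pow_const m).aestronglyMeasurable ?_
    filter_upwards with ω
    simp [abs_pow, abs_abs, le_refl]
  have := h1.const_mul ((a j) ^ m)
  refine this.congr ?_
  filter_upwards with ω
  ring

/-- Integrability of powers of partial sums. -/

lemma ld_int (hX : ∀ i, Measurable (X i))
    (hind : ProbabilityTheory.iIndepFun X μ)
    (hmom : ∀ i p, Integrable (fun ω => |X i ω| ^ p) μ) (s : Finset (Fin N)) :
    ∀ m : ℕ, Integrable (fun ω => (∑ i ∈ s, a i * X i ω) ^ m) μ := by
  classical
  induction s using Finset.induction_on with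
  | empty => intro m; simp only [sum_empty]; exact integrable_const _
  | insert j s hj ih =>
    intro m
    have hEq : (fun ω => (∑ i ∈ insert j s, a i * X i ω) ^ m)
        = fun ω => ∑ p ∈ range (m + 1),
            (a j * X j ω) ^ p * (∑ i ∈ s, a i * X i ω) ^ (m - p) * (m.choose p : ℝ) := by
      funext ω
      rw [Finset.sum_insert hj, add_pow]
    rw [hEq]
    refine integrable_finset_sum _ (fun p _ => ?_)
    have hindp : ProbabilityTheory.IndepFun
        (fun ω => (a j * X j ω) ^ p) (fun ω => (∑ i ∈ s, a i * X i ω) ^ (m - p)) μ := by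
      exact (ld_indep_scaled hX hind hj).symm.comp
        (measurable_id.pow_const p) (measurable_id.pow_const (m - p))
    have := (hindp.integrable_mul (ld_int_single hX hmom j p) (ih (m - p))).mul_const
        ((m.choose p : ℝ))
    exact this.congr (by filter_upwards with ω; simp [Pi.mul_apply])

lemma ld_expand (hX : ∀ i, Measurable (X i))
    (hind : ProbabilityTheory.iIndepFun X μ)
    (hmom : ∀ i p, Integrable (fun ω => |X i ω| ^ p) μ)
    {s : Finset (Fin N)} {j : Fin N} (hj : j ∉ s) (n : ℕ) :
    ∫ ω, (∑ i ∈ insert j s, a i * X i ω) ^ n ∂μ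
      = ∑ m ∈ range (n + 1), (n.choose m : ℝ) * (a j) ^ m
          * (∫ ω, (X j ω) ^ m ∂μ) * (∫ ω, (∑ i ∈ s, a i * X i ω) ^ (n - m) ∂μ) := by
  have hEq : (fun ω => (∑ i ∈ insert j s, a i * X i ω) ^ n)
      = fun ω => ∑ m ∈ range (n + 1),
          (a j * X j ω) ^ m * (∑ i ∈ s, a i * X i ω) ^ (n - m) * (n.choose m : ℝ) := by
    funext ω
    rw [Finset.sum_insert hj, add_pow]
  rw [hEq]
  have hint : ∀ m ∈ range (n + 1), Integrable
      (fun ω => (a j * X j ω) ^ m * (∑ i ∈ s, a i * X i ω) ^ (n - m) * (n.choose m : ℝ)) μ := by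
    intro m _
    have hindp : ProbabilityTheory.IndepFun
        (fun ω => (a j * X j ω) ^ m) (fun ω => (∑ i ∈ s, a i * X i ω) ^ (n - m)) μ :=
      (ld_indep_scaled hX hind hj).symm.comp
        (measurable_id.pow_const m) (measurable_id.pow_const (n - m))
    exact ((hindp.integrable_mul (ld_int_single hX hmom j m)
      (ld_int hX hind hmom s (n - m))).mul_const _ : _)
  rw [integral_finset_sum _ hint]
  refine Finset.sum_congr rfl (fun m _ => ?_)
  have hindp : ProbabilityTheory.IndepFun
      (fun ω => (a j * X j ω) ^ m) (fun ω => (∑ i ∈ s, a i * X i ω) ^ (n - m)) μ :=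
    (ld_indep_scaled hX hind hj).symm.comp
      (measurable_id.pow_const m) (measurable_id.pow_const (n - m))
  rw [integral_mul_const]
  rw [show (fun ω => (a j * X j ω) ^ m * (∑ i ∈ s, a i * X i ω) ^ (n - m))
      = (fun ω => (a j * X j ω) ^ m) * (fun ω => (∑ i ∈ s, a i * X i ω) ^ (n - m)) from rfl] at *
  rw [hindp.integral_mul_eq_mul_integral (ld_int_single hX hmom j m).aestronglyMeasurable (ld_int hX hind hmom s (n - m)).aestronglyMeasurable]
  have : ∫ ω, (a j * X j ω) ^ m ∂μ = (a j) ^ m * ∫ ω, (X j ω) ^ m ∂μ := by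
    rw [← integral_const_mul]
    congr 1; funext ω; ring
  rw [this]; ring

lemma ld_even (hX : ∀ i, Measurable (X i))
    (hind : ProbabilityTheory.iIndepFun X μ)
    (hmean : ∀ i, (∫ ω, X i ω ∂μ) = 0)
    (hmom : ∀ i p, Integrable (fun ω => |X i ω| ^ p) μ)
    (hC : ∀ i p, (∫ ω, |X i ω| ^ p ∂μ) ≤ C p)
    (hSum : ∑ i, (a i) ^ 2 ≤ 1) (k : ℕ)
    (IH : ∀ (s : Finset (Fin N)) (m : ℕ), m ≤ 2 * k →
      ∫ ω, |∑ i ∈ s, a i * X i ω| ^ m ∂μ ≤ ldK C k) :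
    ∀ s : Finset (Fin N), ∫ ω, (∑ i ∈ s, a i * X i ω) ^ (2 * k + 2) ∂μ
      ≤ 1 + (4 ^ (k + 1) * ldK C k * ldCmax C k) * ∑ i ∈ s, (a i) ^ 2 := by
  classical
  have hK1 := ldK_ge_one C k
  have hCm := ldCmax_nonneg C k
  have habsint : ∀ (f : Ω → ℝ), |∫ ω, f ω ∂μ| ≤ ∫ ω, |f ω| ∂μ := fun f => by
    simpa [Real.norm_eq_abs] using norm_integral_le_integral_norm (μ := μ) f
  intro s
  induction s using Finset.induction_on with
  | empty =>
    simp only [sum_empty, mul_zero, add_zero]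
    rw [zero_pow (by omega)]
    simp
  | insert j s hj ih =>
    set n := 2 * k + 2 with hn
    rw [ld_expand hX hind hmom hj n, Finset.sum_range_succ']
    have hf0 : (n.choose 0 : ℝ) * (a j) ^ 0 * (∫ ω, (X j ω) ^ 0 ∂μ)
        * (∫ ω, (∑ i ∈ s, a i * X i ω) ^ (n - 0) ∂μ)
        = ∫ ω, (∑ i ∈ s, a i * X i ω) ^ n ∂μ := by
      simp [measure_univ]
    rw [hf0]
    -- bound each term of the remaining sum
    have haj2 : (a j) ^ 2 ≤ 1 :=
      le_trans (Finset.single_le_sum (fun i _ => sq_nonneg (a i)) (mem_univ j)) hSum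
    have habs : |a j| ≤ 1 := by nlinarith [abs_nonneg (a j), sq_abs (a j)]
    have hterm : ∀ m ∈ range n, (n.choose (m + 1) : ℝ) * (a j) ^ (m + 1)
        * (∫ ω, (X j ω) ^ (m + 1) ∂μ) * (∫ ω, (∑ i ∈ s, a i * X i ω) ^ (n - (m + 1)) ∂μ)
        ≤ (n.choose (m + 1) : ℝ) * ((a j) ^ 2 * (ldCmax C k * ldK C k)) := by
      intro m hm
      rcases Nat.eq_zero_or_pos m with hm0 | hm1
      · subst hm0
        have : (∫ ω, (X j ω) ^ 1 ∂μ) = 0 := by simpa using hmean j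
        rw [this]
        have : (0:ℝ) ≤ (n.choose 1 : ℝ) * ((a j) ^ 2 * (ldCmax C k * ldK C k)) := by positivity
        nlinarith [this]
      · have h_a : |(a j) ^ (m + 1)| ≤ (a j) ^ 2 := by
          rw [abs_pow, ← sq_abs]
          exact pow_le_pow_of_le_one (abs_nonneg _) habs (by omega)
        have h_X : |∫ ω, (X j ω) ^ (m + 1) ∂μ| ≤ ldCmax C k := by
          refine le_trans (habsint _) ?_
          have : (∫ ω, |(X j ω) ^ (m + 1)| ∂μ) = ∫ ω, |X j ω| ^ (m + 1) ∂μ := by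
            simp_rw [abs_pow]
          rw [this]
          refine le_trans (hC j (m + 1)) (ldCmax_ge C k ?_)
          have := mem_range.1 hm; omega
        have h_T : |∫ ω, (∑ i ∈ s, a i * X i ω) ^ (n - (m + 1)) ∂μ| ≤ ldK C k := by
          refine le_trans (habsint _) ?_
          have : (∫ ω, |(∑ i ∈ s, a i * X i ω) ^ (n - (m + 1))| ∂μ)
              = ∫ ω, |∑ i ∈ s, a i * X i ω| ^ (n - (m + 1)) ∂μ := by simp_rw [abs_pow]
          rw [this]
          exact IH s _ (by omega)
        calc (n.choose (m + 1) : ℝ) * (a j) ^ (m + 1) * (∫ ω, (X j ω) ^ (m + 1) ∂μ)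
              * (∫ ω, (∑ i ∈ s, a i * X i ω) ^ (n - (m + 1)) ∂μ)
            ≤ |(n.choose (m + 1) : ℝ) * (a j) ^ (m + 1) * (∫ ω, (X j ω) ^ (m + 1) ∂μ)
              * (∫ ω, (∑ i ∈ s, a i * X i ω) ^ (n - (m + 1)) ∂μ)| := le_abs_self _
          _ = (n.choose (m + 1) : ℝ) * (|(a j) ^ (m + 1)| * (|∫ ω, (X j ω) ^ (m + 1) ∂μ|
              * |∫ ω, (∑ i ∈ s, a i * X i ω) ^ (n - (m + 1)) ∂μ|)) := by
              rw [abs_mul, abs_mul, abs_mul, Nat.abs_cast]; ring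
          _ ≤ (n.choose (m + 1) : ℝ) * ((a j) ^ 2 * (ldCmax C k * ldK C k)) := by
              refine mul_le_mul_of_nonneg_left ?_ (Nat.cast_nonneg _)
              refine mul_le_mul h_a ?_ (by positivity) (sq_nonneg _)
              exact mul_le_mul h_X h_T (abs_nonneg _) hCm
    have hsum : ∑ m ∈ range n, (n.choose (m + 1) : ℝ) * (a j) ^ (m + 1)
        * (∫ ω, (X j ω) ^ (m + 1) ∂μ) * (∫ ω, (∑ i ∈ s, a i * X i ω) ^ (n - (m + 1)) ∂μ)
        ≤ (4:ℝ) ^ (k + 1) * ((a j) ^ 2 * (ldCmax C k * ldK C k)) := by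
      refine le_trans (Finset.sum_le_sum hterm) ?_
      rw [← Finset.sum_mul]
      have hch : (∑ m ∈ range n, (n.choose (m + 1) : ℝ)) ≤ (4:ℝ) ^ (k + 1) := by
        have hnat : ∑ m ∈ range n, n.choose (m + 1) ≤ 2 ^ n := by
          calc ∑ m ∈ range n, n.choose (m + 1)
              ≤ ∑ i ∈ range (n + 1), n.choose i := by
                conv_rhs => rw [Finset.sum_range_succ']
                exact Nat.le_add_right _ _
            _ = 2 ^ n := Nat.sum_range_choose n
        have h2 : ((2:ℝ)) ^ n = (4:ℝ) ^ (k + 1) := by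
          rw [hn, show 2 * k + 2 = 2 * (k + 1) from by ring, pow_mul]; norm_num
        calc (∑ m ∈ range n, (n.choose (m + 1) : ℝ)) = ((∑ m ∈ range n, n.choose (m + 1) : ℕ) : ℝ) := by
              push_cast; ring
          _ ≤ ((2:ℕ) ^ n : ℝ) := by exact_mod_cast hnat
          _ = (4:ℝ) ^ (k + 1) := by push_cast; exact h2
      exact mul_le_mul_of_nonneg_right hch (by positivity)
    have hihs := ih
    rw [Finset.sum_insert hj]
    have hfinal := add_le_add hsum hihs
    nlinarith [hfinal]

lemma ld_mom (hX : ∀ i, Measurable (X i))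
    (hind : ProbabilityTheory.iIndepFun X μ)
    (hmean : ∀ i, (∫ ω, X i ω ∂μ) = 0)
    (hmom : ∀ i p, Integrable (fun ω => |X i ω| ^ p) μ)
    (hC : ∀ i p, (∫ ω, |X i ω| ^ p ∂μ) ≤ C p)
    (hSum : ∑ i, (a i) ^ 2 ≤ 1) :
    ∀ k, ∀ (s : Finset (Fin N)) (m : ℕ), m ≤ 2 * k →
      ∫ ω, |∑ i ∈ s, a i * X i ω| ^ m ∂μ ≤ ldK C k := by
  intro k
  induction k with
  | zero =>
    intro s m hm
    have : m = 0 := by omega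
    subst this
    simp [ldK, measure_univ]
  | succ k ih =>
    intro s m hm
    have hK1 := ldK_ge_one C k
    have hCm := ldCmax_nonneg C k
    have hB : (0:ℝ) ≤ 4 ^ (k + 1) * ldK C k * ldCmax C k := by positivity
    have hsub : ∑ i ∈ s, (a i) ^ 2 ≤ 1 :=
      le_trans (Finset.sum_le_sum_of_subset_of_nonneg (subset_univ s)
        (fun i _ _ => sq_nonneg _)) hSum
    have heven : ∫ ω, (∑ i ∈ s, a i * X i ω) ^ (2 * k + 2) ∂μ
        ≤ 1 + 4 ^ (k + 1) * ldK C k * ldCmax C k := by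
      refine le_trans (ld_even hX hind hmean hmom hC hSum k ih s) ?_
      nlinarith [mul_le_mul_of_nonneg_left hsub hB]
    have hKs : ldK C (k + 1) = 1 + ldK C k + 4 ^ (k + 1) * ldK C k * ldCmax C k := rfl
    -- rewrite |T|^even as T^even inside integrals
    have heq : ∀ r : ℕ, (∫ ω, |∑ i ∈ s, a i * X i ω| ^ (2 * r) ∂μ)
        = ∫ ω, (∑ i ∈ s, a i * X i ω) ^ (2 * r) ∂μ := by
      intro r; congr 1; funext ω; exact ld_abs_even _ r
    rcases Nat.lt_or_ge m (2 * k + 1) with hlt | hge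
    · exact le_trans (ih s m (by omega)) (ldK_le_succ C k)
    · have : m = 2 * k + 1 ∨ m = 2 * k + 2 := by omega
      rcases this with hm1 | hm2
      · subst hm1
        have hint1 : Integrable (fun ω => |∑ i ∈ s, a i * X i ω| ^ (2 * k + 1)) μ := by
          refine ((ld_int (a := a) hX hind hmom s (2 * k + 1)).abs).congr ?_
          filter_upwards with ω; rw [abs_pow]
        have hint2 : Integrable (fun ω => (∑ i ∈ s, a i * X i ω) ^ (2 * k)
            + (∑ i ∈ s, a i * X i ω) ^ (2 * k + 2)) μ :=
          (ld_int hX hind hmom s (2 * k)).add (ld_int hX hind hmom s (2 * k + 2))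
        have hmono : ∫ ω, |∑ i ∈ s, a i * X i ω| ^ (2 * k + 1) ∂μ
            ≤ ∫ ω, ((∑ i ∈ s, a i * X i ω) ^ (2 * k)
                + (∑ i ∈ s, a i * X i ω) ^ (2 * k + 2)) ∂μ :=
          integral_mono hint1 hint2 (fun ω => ld_odd_pt _ k)
        rw [integral_add (ld_int hX hind hmom s (2 * k)) (ld_int hX hind hmom s (2 * k + 2))]
          at hmono
        have h1 : ∫ ω, (∑ i ∈ s, a i * X i ω) ^ (2 * k) ∂μ ≤ ldK C k := by
          rw [← heq k]; exact ih s (2 * k) le_rfl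
        rw [hKs]
        linarith
      · subst hm2
        have h2 : (2 : ℕ) * k + 2 = 2 * (k + 1) := by ring
        have := heq (k + 1)
        rw [h2, this, ← h2]
        rw [hKs]
        linarith

lemma ld_tail (hX : ∀ i, Measurable (X i))
    (hind : ProbabilityTheory.iIndepFun X μ)
    (hmean : ∀ i, (∫ ω, X i ω ∂μ) = 0)
    (hmom : ∀ i p, Integrable (fun ω => |X i ω| ^ p) μ)
    (hC : ∀ i p, (∫ ω, |X i ω| ^ p ∂μ) ≤ C p)
    (hSum : ∑ i, (a i) ^ 2 ≤ 1) (k : ℕ) {t : ℝ} (ht : 0 < t) :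
    μ {ω | t ≤ |∑ i, a i * X i ω|} ≤ ENNReal.ofReal (ldK C k / t ^ (2 * k)) := by
  have hmono : {ω | t ≤ |∑ i, a i * X i ω|}
      ⊆ {ω | t ^ (2 * k) ≤ (∑ i, a i * X i ω) ^ (2 * k)} := by
    intro ω hω
    have h1 : t ^ (2 * k) ≤ |∑ i, a i * X i ω| ^ (2 * k) :=
      pow_le_pow_left₀ ht.le hω _
    rwa [ld_abs_even] at h1
  refine le_trans (measure_mono hmono) ?_
  have hms := mul_meas_ge_le_integral_of_nonneg (μ := μ)
    (f := fun ω => (∑ i, a i * X i ω) ^ (2 * k))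
    (Filter.Eventually.of_forall fun ω => ld_even_pow_nonneg _ k)
    (ld_int hX hind hmom univ (2 * k)) (t ^ (2 * k))
  have hintK : ∫ ω, (∑ i, a i * X i ω) ^ (2 * k) ∂μ ≤ ldK C k := by
    have h := ld_mom hX hind hmean hmom hC hSum k univ (2 * k) le_rfl
    have heq : (∫ ω, |∑ i, a i * X i ω| ^ (2 * k) ∂μ)
        = ∫ ω, (∑ i, a i * X i ω) ^ (2 * k) ∂μ := by
      congr 1; funext ω; exact ld_abs_even _ k
    rwa [heq] at h
  have htp : (0:ℝ) < t ^ (2 * k) := pow_pos ht _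
  set S := {ω | t ^ (2 * k) ≤ (∑ i, a i * X i ω) ^ (2 * k)}
  have h2 : (μ S).toReal ≤ ldK C k / t ^ (2 * k) := by
    rw [le_div_iff₀ htp]
    calc (μ S).toReal * t ^ (2 * k) = t ^ (2 * k) * (μ S).toReal := by ring
      _ ≤ _ := le_trans hms hintK
  calc μ S = ENNReal.ofReal (μ S).toReal := (ENNReal.ofReal_toReal (measure_ne_top μ S)).symm
    _ ≤ ENNReal.ofReal (ldK C k / t ^ (2 * k)) := ENNReal.ofReal_le_ofReal h2

end aux

set_option maxHeartbeats 1000000 in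
/-- Large deviation bound for linear forms in independent centered random variables. -/
theorem stmt5 (C : ℕ → ℝ) (ε D : ℝ) (hε : 0 < ε) (hD : 0 < D) :
    ∃ N₀ : ℕ, ∀ N ≥ N₀, ∀ (Ω : Type) [MeasurableSpace Ω] (μ : Measure Ω),
      IsProbabilityMeasure μ →
      ∀ (X : Fin N → Ω → ℝ) (b : Fin N → ℂ),
      (∀ i, Measurable (X i)) →
      ProbabilityTheory.iIndepFun X μ →
      (∀ i, (∫ ω, X i ω ∂μ) = 0) →
      (∀ i, (∫ ω, (X i ω) ^ 2 ∂μ) = 1) →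
      (∀ i p, Integrable (fun ω => |X i ω| ^ p) μ) →
      (∀ i p, (∫ ω, |X i ω| ^ p ∂μ) ≤ C p) →
      μ {ω | (N : ℝ) ^ ε * Real.sqrt (∑ i, ‖b i‖ ^ 2) <
          ‖∑ i, b i * (X i ω)‖} ≤ ENNReal.ofReal ((N : ℝ) ^ (-D)) := by
  classical
  set k : ℕ := ⌈(D + 1) / ε⌉₊ + 1 with hk
  set K : ℝ := ldK C k with hKdef
  have hK1 : 1 ≤ K := ldK_ge_one C k
  refine ⟨max 2 ⌈2 ^ (2 * k + 1) * K⌉₊, ?_⟩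
  intro N hN Ω _ μ hprob X b hX hind hmean _hvar hmom hC
  haveI := hprob
  have hsum_nonneg : (0:ℝ) ≤ ∑ i, ‖b i‖ ^ 2 :=
    Finset.sum_nonneg fun i _ => sq_nonneg _
  set Ψ : ℝ := Real.sqrt (∑ i, ‖b i‖ ^ 2) with hΨdef
  -- numbers about N
  have hN2 : (2:ℝ) ≤ (N:ℝ) := by
    have : 2 ≤ N := le_trans (le_max_left _ _) hN
    exact_mod_cast this
  have hN0 : (0:ℝ) < (N:ℝ) := by linarith
  have hN1 : (1:ℝ) ≤ (N:ℝ) := by linarith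
  rcases eq_or_lt_of_le hsum_nonneg with hzero | hpos
  · -- all coefficients vanish
    have hball : ∀ i ∈ Finset.univ, ‖b i‖ ^ 2 = 0 :=
      (Finset.sum_eq_zero_iff_of_nonneg (fun i _ => sq_nonneg _)).1 hzero.symm
    have hb0 : ∀ i : Fin N, b i = 0 := by
      intro i
      have := hball i (Finset.mem_univ i)
      have habs : ‖b i‖ = 0 := by nlinarith [norm_nonneg (b i)]
      exact norm_eq_zero.1 habs
    have hset : {ω | (N : ℝ) ^ ε * Ψ < ‖∑ i, b i * (X i ω)‖} = ∅ := by
      ext ω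
      simp only [Set.mem_setOf_eq, Set.mem_empty_iff_false, iff_false, not_lt]
      have h1 : (∑ i, b i * (X i ω)) = 0 := by
        refine Finset.sum_eq_zero fun i _ => ?_
        rw [hb0 i, zero_mul]
      rw [h1]
      simp only [norm_zero]
      have : Ψ = 0 := by rw [hΨdef, ← hzero, Real.sqrt_zero]
      rw [this, mul_zero]
    rw [hset]
    simp
  · -- main case
    have hΨpos : 0 < Ψ := Real.sqrt_pos.2 hpos
    have hΨsq : Ψ ^ 2 = ∑ i, ‖b i‖ ^ 2 := Real.sq_sqrt hsum_nonneg
    set u : Fin N → ℝ := fun i => (b i).re / Ψ with hu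
    set v : Fin N → ℝ := fun i => (b i).im / Ψ with hv
    have habs2 : ∀ i : Fin N, ‖b i‖ ^ 2 = (b i).re ^ 2 + (b i).im ^ 2 := by
      intro i
      rw [Complex.sq_norm, Complex.normSq_apply]; ring
    have hsu : ∑ i, (u i) ^ 2 ≤ 1 := by
      have h1 : ∑ i, (u i) ^ 2 = (∑ i, (b i).re ^ 2) / Ψ ^ 2 := by
        rw [Finset.sum_div]
        exact Finset.sum_congr rfl fun i _ => by rw [hu, div_pow]
      rw [h1, div_le_one (pow_pos hΨpos 2), hΨsq]
      exact Finset.sum_le_sum fun i _ => by rw [habs2 i]; nlinarith [sq_nonneg (b i).im]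
    have hsv : ∑ i, (v i) ^ 2 ≤ 1 := by
      have h1 : ∑ i, (v i) ^ 2 = (∑ i, (b i).im ^ 2) / Ψ ^ 2 := by
        rw [Finset.sum_div]
        exact Finset.sum_congr rfl fun i _ => by rw [hv, div_pow]
      rw [h1, div_le_one (pow_pos hΨpos 2), hΨsq]
      exact Finset.sum_le_sum fun i _ => by rw [habs2 i]; nlinarith [sq_nonneg (b i).re]
    set t : ℝ := (N:ℝ) ^ ε / 2 with htdef
    have ht : 0 < t := by
      have := Real.rpow_pos_of_pos hN0 ε
      rw [htdef]; linarith
    -- event inclusion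
    have hincl : {ω | (N : ℝ) ^ ε * Ψ < ‖∑ i, b i * (X i ω)‖}
        ⊆ {ω | t ≤ |∑ i, u i * X i ω|} ∪ {ω | t ≤ |∑ i, v i * X i ω|} := by
      intro ω hω
      simp only [Set.mem_setOf_eq] at hω
      have hre : (∑ i, b i * (X i ω)).re = ∑ i, (b i).re * X i ω := by
        rw [Complex.re_sum]
        exact Finset.sum_congr rfl fun i _ => by simp [Complex.mul_re]
      have him : (∑ i, b i * (X i ω)).im = ∑ i, (b i).im * X i ω := by
        rw [Complex.im_sum]
        exact Finset.sum_congr rfl fun i _ => by simp [Complex.mul_im]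
      have hbound := Complex.norm_le_abs_re_add_abs_im (∑ i, b i * (X i ω))
      rw [hre, him] at hbound
      have hsumu : ∑ i, u i * X i ω = (∑ i, (b i).re * X i ω) / Ψ := by
        rw [Finset.sum_div]
        exact Finset.sum_congr rfl fun i _ => by rw [hu]; ring
      have hsumv : ∑ i, v i * X i ω = (∑ i, (b i).im * X i ω) / Ψ := by
        rw [Finset.sum_div]
        exact Finset.sum_congr rfl fun i _ => by rw [hv]; ring
      by_contra hcon
      simp only [Set.mem_union, Set.mem_setOf_eq, not_or, not_le] at hcon
      obtain ⟨h1, h2⟩ := hcon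
      rw [hsumu, abs_div, abs_of_pos hΨpos, div_lt_iff₀ hΨpos] at h1
      rw [hsumv, abs_div, abs_of_pos hΨpos, div_lt_iff₀ hΨpos] at h2
      have : ‖∑ i, b i * (X i ω)‖ < (N:ℝ) ^ ε * Ψ := by
        calc ‖∑ i, b i * (X i ω)‖
            ≤ |∑ i, (b i).re * X i ω| + |∑ i, (b i).im * X i ω| := hbound
          _ < t * Ψ + t * Ψ := by linarith
          _ = (N:ℝ) ^ ε * Ψ := by rw [htdef]; ring
      linarith
    refine le_trans (measure_mono hincl) (le_trans (measure_union_le _ _) ?_)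
    have hb1 := ld_tail hX hind hmean hmom hC hsu k ht
    have hb2 := ld_tail hX hind hmean hmom hC hsv k ht
    refine le_trans (add_le_add hb1 hb2) ?_
    rw [← ENNReal.ofReal_add (by positivity) (by positivity)]
    refine ENNReal.ofReal_le_ofReal ?_
    -- the real inequality
    have htp : (0:ℝ) < t ^ (2 * k) := pow_pos ht _
    have hMle : 2 ^ (2 * k + 1) * K ≤ (N:ℝ) := by
      have h1 : (⌈2 ^ (2 * k + 1) * K⌉₊ : ℝ) ≤ (N:ℝ) := by
        exact_mod_cast le_trans (le_max_right _ _) hN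
      exact le_trans (Nat.le_ceil _) h1
    have hγ : (1:ℝ) ≤ ε * (2 * (k:ℝ)) - D := by
      have hceil : (D + 1) / ε ≤ (k:ℝ) := by
        rw [hk]
        push_cast
        linarith [Nat.le_ceil ((D + 1) / ε)]
      have : D + 1 ≤ ε * (k:ℝ) := by
        rw [div_le_iff₀ hε] at hceil; linarith
      nlinarith
    have hpow : (N:ℝ) ≤ (N:ℝ) ^ (ε * (2 * (k:ℝ)) - D) := by
      calc (N:ℝ) = (N:ℝ) ^ (1:ℝ) := (Real.rpow_one _).symm
        _ ≤ _ := Real.rpow_le_rpow_of_exponent_le hN1 hγ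
    have htpow : t ^ (2 * k) = (N:ℝ) ^ (ε * (2 * (k:ℝ))) / 2 ^ (2 * k) := by
      rw [htdef, div_pow]
      congr 1
      rw [← Real.rpow_natCast ((N:ℝ) ^ ε) (2 * k), ← Real.rpow_mul hN0.le]
      congr 1
      push_cast
      ring
    rw [← add_div, div_le_iff₀ htp]
    calc K + K ≤ 2 * K := by linarith
      _ ≤ (N:ℝ) ^ (-D) * t ^ (2 * k) := by
          rw [htpow, ← mul_div_assoc, ← Real.rpow_add hN0, le_div_iff₀ (by positivity)]
          calc 2 * K * 2 ^ (2 * k) = 2 ^ (2 * k + 1) * K := by ring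
            _ ≤ (N:ℝ) := hMle
            _ ≤ (N:ℝ) ^ (ε * (2 * (k:ℝ)) - D) := hpow
            _ = (N:ℝ) ^ (-D + ε * (2 * (k:ℝ))) := by ring_nf
      _ = (N:ℝ) ^ (-D) * t ^ (2 * k) := rfl
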